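/- arXiv:2403.12394 — 8 statements merged into one kernel-verified Lean document; each statement's English description precedes it below -/
import Mathlib

section
/- On a finite hypergraph, the divergence operator div : H(E⃗) → L²(V) defined by div φ(v) = −(1/μ(v)) Σ_{e⃗∈E⃗ : v∈e⃗} (√ω_{e⃗}/(δ_{e⃗}!√(δ_{e⃗}−1))) φ(e⃗) + (1/μ(v)) Σ_{e⃗∈E⃗ : e⃗(1)=v} (δ_{e⃗}√ω_{e⃗}/(δ_{e⃗}!√(δ_{e⃗}−1))) φ(e⃗) satisfies the adjointness relation ⟨∇ψ, φ⟩_{E⃗} = ⟨ψ, −div φ⟩_V for all ψ : V → ℝ and φ : E⃗ → ℝ, and is the unique operator with this property. -/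
/-- The hypergraph gradient on a directed hyperedge, encoded as a list of vertices:
`∇φ(e⃗) = √(ω_{e⃗}/(δ_{e⃗}−1)) Σ_{u∈e⃗} (φ u − φ(e⃗(1)))`. -/
noncomputable def hGrad {V : Type*} [DecidableEq V] [Inhabited V] (ω : Finset V → ℝ)
    (φ : V → ℝ) (l : List V) : ℝ :=
  Real.sqrt (ω l.toFinset / ((l.length : ℝ) - 1)) *
    (l.map (fun u => φ u - φ l.headI)).sum

/-- The set of directed hyperedges arising from the hyperedge `e`: all orderings
(permutations) of the vertices of `e`. -/
noncomputable def dirEdges {V : Type*} [DecidableEq V] (e : Finset V) : Finset (List V) :=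
  e.toList.permutations.toFinset

/-- Inner product on functions on the symmetric directed hyperedge set:
`⟨F,G⟩_{E⃗} = Σ_{e⃗∈E⃗} (1/δ_{e⃗}!) F(e⃗) G(e⃗)`. -/
noncomputable def hInnerE {V : Type*} [DecidableEq V] (E : Finset (Finset V))
    (F G : List V → ℝ) : ℝ :=
  ∑ e ∈ E, ∑ l ∈ dirEdges e, (1 / (Nat.factorial l.length : ℝ)) * (F l * G l)

/-- The hypergraph divergence:
`div φ(v) = −(1/μ v) Σ_{e⃗∋v} (√ω/(δ!√(δ−1))) φ(e⃗) + (1/μ v) Σ_{e⃗(1)=v} (δ√ω/(δ!√(δ−1))) φ(e⃗)`. -/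
noncomputable def hDiv {V : Type*} [DecidableEq V] [Inhabited V]
    (E : Finset (Finset V)) (ω : Finset V → ℝ) (μ : V → ℝ)
    (φ : List V → ℝ) (v : V) : ℝ :=
  -(1 / μ v) * ∑ e ∈ E, ∑ l ∈ (dirEdges e).filter (fun l => v ∈ l),
      (Real.sqrt (ω e) / ((Nat.factorial l.length : ℝ) * Real.sqrt ((l.length : ℝ) - 1))) * φ l
  + (1 / μ v) * ∑ e ∈ E, ∑ l ∈ (dirEdges e).filter (fun l => l.headI = v),
      ((l.length : ℝ) * Real.sqrt (ω e) / ((Nat.factorial l.length : ℝ) * Real.sqrt ((l.length : ℝ) - 1))) * φ l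


private lemma dirEdges_perm {V : Type*} [DecidableEq V] {e : Finset V} {l : List V}
    (hl : l ∈ dirEdges e) : l.Perm e.toList :=
  List.mem_permutations.mp (List.mem_toFinset.mp hl)

private lemma dirEdges_toFinset {V : Type*} [DecidableEq V] {e : Finset V} {l : List V}
    (hl : l ∈ dirEdges e) : l.toFinset = e := by
  have hp := dirEdges_perm hl
  ext x
  simp [List.mem_toFinset, hp.mem_iff]

private lemma dirEdges_nodup {V : Type*} [DecidableEq V] {e : Finset V} {l : List V}
    (hl : l ∈ dirEdges e) : l.Nodup :=
  (dirEdges_perm hl).nodup_iff.mpr e.nodup_toList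

private lemma map_sub_sum {V : Type*} (ψ : V → ℝ) (c : ℝ) (l : List V) :
    (l.map (fun u => ψ u - c)).sum = (l.map ψ).sum - (l.length : ℝ) * c := by
  induction l with
  | nil => simp
  | cons a t ih =>
    simp only [List.map_cons, List.sum_cons, ih, List.length_cons, Nat.cast_add, Nat.cast_one]
    ring

/-- the divergence satisfies the adjointness relation
`⟨∇ψ, φ⟩_{E⃗} = ⟨ψ, −div φ⟩_V` for all `ψ : V → ℝ`, `φ : E⃗ → ℝ`, and it is the
unique operator with this property. -/
theorem stmt_1 {V : Type*} [Fintype V] [DecidableEq V] [Inhabited V]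
    (E : Finset (Finset V)) (ω : Finset V → ℝ) (μ : V → ℝ)
    (hcard : ∀ e ∈ E, 2 ≤ e.card) (hω : ∀ e ∈ E, 0 < ω e) (hμ : ∀ v : V, 0 < μ v) :
    (∀ (ψ : V → ℝ) (φ : List V → ℝ),
        hInnerE E (hGrad ω ψ) φ = ∑ v, μ v * (ψ v * (-(hDiv E ω μ φ v)))) ∧
    (∀ D : (List V → ℝ) → V → ℝ,
        (∀ (ψ : V → ℝ) (φ : List V → ℝ),
            hInnerE E (hGrad ω ψ) φ = ∑ v, μ v * (ψ v * (-(D φ v)))) →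
        ∀ (φ : List V → ℝ) (v : V), D φ v = hDiv E ω μ φ v) := by
  have hμ0 : ∀ v : V, μ v ≠ 0 := fun v => (hμ v).ne'
  have main : ∀ (ψ : V → ℝ) (φ : List V → ℝ),
      hInnerE E (hGrad ω ψ) φ = ∑ v, μ v * (ψ v * (-(hDiv E ω μ φ v))) := by
    intro ψ φ
    have key : ∀ v : V, μ v * (ψ v * (-(hDiv E ω μ φ v))) =
        (∑ e ∈ E, ∑ l ∈ (dirEdges e).filter (fun l => v ∈ l),
          ψ v * ((Real.sqrt (ω e) / ((Nat.factorial l.length : ℝ) * Real.sqrt ((l.length : ℝ) - 1))) * φ l))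
        - (∑ e ∈ E, ∑ l ∈ (dirEdges e).filter (fun l => l.headI = v),
          ψ v * (((l.length : ℝ) * Real.sqrt (ω e) / ((Nat.factorial l.length : ℝ) * Real.sqrt ((l.length : ℝ) - 1))) * φ l)) := by
      intro v
      have alg : ∀ m p a b : ℝ, m ≠ 0 →
          m * (p * (-(-(1 / m) * a + (1 / m) * b))) = p * a - p * b := by
        intro m p a b hm
        field_simp
        ring
      unfold hDiv
      simp only [← Finset.mul_sum]
      exact alg (μ v) (ψ v) _ _ (hμ0 v)
    rw [Finset.sum_congr rfl (fun v _ => key v), Finset.sum_sub_distrib]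
    have hA : (∑ v : V, ∑ e ∈ E, ∑ l ∈ (dirEdges e).filter (fun l => v ∈ l),
          ψ v * ((Real.sqrt (ω e) / ((Nat.factorial l.length : ℝ) * Real.sqrt ((l.length : ℝ) - 1))) * φ l))
        = ∑ e ∈ E, ∑ l ∈ dirEdges e,
          (l.map ψ).sum * ((Real.sqrt (ω e) / ((Nat.factorial l.length : ℝ) * Real.sqrt ((l.length : ℝ) - 1))) * φ l) := by
      rw [Finset.sum_comm]
      refine Finset.sum_congr rfl (fun e _ => ?_)
      simp only [Finset.sum_filter]
      rw [Finset.sum_comm]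
      refine Finset.sum_congr rfl (fun l hl => ?_)
      have hfil : Finset.univ.filter (fun v : V => v ∈ l) = l.toFinset := by
        ext x; simp
      rw [← Finset.sum_filter, hfil, ← Finset.sum_mul,
        List.sum_toFinset ψ (dirEdges_nodup hl)]
    have hB : (∑ v : V, ∑ e ∈ E, ∑ l ∈ (dirEdges e).filter (fun l => l.headI = v),
          ψ v * (((l.length : ℝ) * Real.sqrt (ω e) / ((Nat.factorial l.length : ℝ) * Real.sqrt ((l.length : ℝ) - 1))) * φ l))
        = ∑ e ∈ E, ∑ l ∈ dirEdges e,
          ψ l.headI * (((l.length : ℝ) * Real.sqrt (ω e) / ((Nat.factorial l.length : ℝ) * Real.sqrt ((l.length : ℝ) - 1))) * φ l) := by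
      rw [Finset.sum_comm]
      refine Finset.sum_congr rfl (fun e _ => ?_)
      simp only [Finset.sum_filter]
      rw [Finset.sum_comm]
      refine Finset.sum_congr rfl (fun l _ => ?_)
      rw [Finset.sum_ite_eq]
      simp
    rw [hA, hB]
    unfold hInnerE
    rw [← Finset.sum_sub_distrib]
    refine Finset.sum_congr rfl (fun e he => ?_)
    rw [← Finset.sum_sub_distrib]
    refine Finset.sum_congr rfl (fun l hl => ?_)
    unfold hGrad
    rw [dirEdges_toFinset hl, map_sub_sum, Real.sqrt_div (hω e he).le]
    ring
  refine ⟨main, ?_⟩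
  intro D hD φ v
  have h1 := hD (fun u => if v = u then (1 : ℝ) else 0) φ
  have h2 := main (fun u => if v = u then (1 : ℝ) else 0) φ
  rw [h2] at h1
  simp only [ite_mul, one_mul, zero_mul, mul_ite, mul_zero, Finset.sum_ite_eq,
    Finset.mem_univ, if_true] at h1
  have := mul_left_cancel₀ (hμ0 v) h1.symm
  exact (neg_injective this)
end

section
/- The hypergraph Laplacian Δφ := div(∇φ) satisfies, for every vertex v ∈ V, Δφ(v) = (1/μ(v)) Σ_{e∈E : v∈e} (ω_e/(δ_e−1)) Σ_{u∈e, u≠v} (φ(u) − φ(v)). -/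
/-- The hypergraph Laplacian:
`Δφ(v) = (1/μ v) Σ_{e∈E, v∈e} (ω e/(δ_e−1)) Σ_{u∈e, u≠v} (φ u − φ v)`. -/
noncomputable def hLap {V : Type*} [DecidableEq V] (E : Finset (Finset V)) (ω : Finset V → ℝ)
    (μ : V → ℝ) (φ : V → ℝ) (v : V) : ℝ :=
  (1 / μ v) * ∑ e ∈ E.filter (fun e => v ∈ e),
    (ω e / ((e.card : ℝ) - 1)) * ∑ u ∈ e.erase v, (φ u - φ v)

section aux
variable {V : Type*} [DecidableEq V]

lemma mem_dirEdges {e : Finset V} {l : List V} : l ∈ dirEdges e ↔ l.Perm e.toList := by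
  simp [dirEdges, List.mem_permutations]

lemma length_of_mem_dirEdges {e : Finset V} {l : List V} (h : l ∈ dirEdges e) :
    l.length = e.card := by
  rw [mem_dirEdges] at h
  rw [h.length_eq, Finset.length_toList]

lemma nodup_of_mem_dirEdges {e : Finset V} {l : List V} (h : l ∈ dirEdges e) : l.Nodup := by
  rw [mem_dirEdges] at h
  exact h.nodup_iff.mpr e.nodup_toList

lemma toFinset_of_mem_dirEdges {e : Finset V} {l : List V} (h : l ∈ dirEdges e) :
    l.toFinset = e := by
  rw [mem_dirEdges] at h
  rw [List.toFinset_eq_of_perm _ _ h, Finset.toList_toFinset]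

lemma mem_iff_of_mem_dirEdges {e : Finset V} {l : List V} (h : l ∈ dirEdges e) {v : V} :
    v ∈ l ↔ v ∈ e := by
  rw [← List.mem_toFinset, toFinset_of_mem_dirEdges h]

lemma card_dirEdges (e : Finset V) : (dirEdges e).card = e.card.factorial := by
  rw [dirEdges, List.toFinset_card_of_nodup (List.nodup_permutations _ e.nodup_toList),
    List.length_permutations, Finset.length_toList]

lemma erase_toList_perm (e : Finset V) (w : V) :
    ((e.erase w).toList).Perm (e.toList.erase w) := by
  apply List.perm_of_nodup_nodup_toFinset_eq (Finset.nodup_toList _) (e.nodup_toList.erase w)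
  ext x
  simp [Finset.toList_toFinset, List.Nodup.mem_erase_iff e.nodup_toList, Finset.mem_toList,
    and_comm]

lemma card_fiber [Inhabited V] (e : Finset V) {w : V} (hw : w ∈ e) :
    ((dirEdges e).filter (fun l => l.headI = w)).card = (e.card - 1).factorial := by
  have h1 : (dirEdges (e.erase w)).card = (e.card - 1).factorial := by
    rw [card_dirEdges, Finset.card_erase_of_mem hw]
  rw [← h1]
  symm
  have h2 := erase_toList_perm e w
  have h3 : e.toList.Perm (w :: e.toList.erase w) :=
    List.perm_cons_erase (by rwa [Finset.mem_toList])
  apply Finset.card_bij' (fun l _ => w :: l) (fun l _ => l.tail)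
  · intro l hl
    rw [mem_dirEdges] at hl
    rw [Finset.mem_filter, mem_dirEdges]
    exact ⟨((hl.trans h2).cons w).trans h3.symm, rfl⟩
  · intro l hl
    rw [Finset.mem_filter, mem_dirEdges] at hl
    obtain ⟨hl, hh⟩ := hl
    rw [mem_dirEdges]
    cases l with
    | nil =>
      exfalso
      have h0 := hl.length_eq
      rw [Finset.length_toList] at h0
      exact absurd hw (by simp [Finset.card_eq_zero.mp h0.symm])
    | cons a t =>
      simp only [List.headI] at hh
      subst hh
      simpa using (hl.trans h3).cons_inv.trans h2.symm
  · intro l _; rfl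
  · intro l hl
    rw [Finset.mem_filter, mem_dirEdges] at hl
    obtain ⟨hl, hh⟩ := hl
    cases l with
    | nil =>
      exfalso
      have h0 := hl.length_eq
      rw [Finset.length_toList] at h0
      exact absurd hw (by simp [Finset.card_eq_zero.mp h0.symm])
    | cons a t =>
      simp only [List.headI] at hh
      subst hh
      rfl

lemma headI_mem_of_mem_dirEdges [Inhabited V] {e : Finset V} {l : List V}
    (he : e.Nonempty) (h : l ∈ dirEdges e) : l.headI ∈ e := by
  rw [← mem_iff_of_mem_dirEdges h]
  cases l with
  | nil =>
    exfalso
    have h0 := length_of_mem_dirEdges h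
    simp at h0
    exact absurd he (by simp [Finset.card_eq_zero.mp h0.symm])
  | cons a t => exact List.mem_cons_self

/-- Sum over all permutations of a function of the head. -/
lemma sum_headI [Inhabited V] (e : Finset V) (he : e.Nonempty) (f : V → ℝ) :
    ∑ l ∈ dirEdges e, f l.headI = ((e.card - 1).factorial : ℝ) * ∑ w ∈ e, f w := by
  rw [← Finset.sum_fiberwise_of_maps_to (g := fun l => l.headI)
    (fun l hl => headI_mem_of_mem_dirEdges he hl) (fun l => f l.headI)]
  rw [Finset.mul_sum]
  refine Finset.sum_congr rfl fun w hw => ?_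
  have : ∀ l ∈ (dirEdges e).filter (fun l => l.headI = w), f l.headI = f w := by
    intro l hl
    rw [(Finset.mem_filter.mp hl).2]
  rw [Finset.sum_congr rfl this, Finset.sum_const, card_fiber e hw, nsmul_eq_mul]

/-- Evaluation of the gradient on a directed edge. -/
lemma hGrad_eval [Inhabited V] {e : Finset V} {l : List V} (h : l ∈ dirEdges e)
    (ω : Finset V → ℝ) (φ : V → ℝ) :
    hGrad ω φ l = Real.sqrt (ω e / ((e.card : ℝ) - 1)) *
      ((∑ u ∈ e, φ u) - (e.card : ℝ) * φ l.headI) := by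
  rw [hGrad, toFinset_of_mem_dirEdges h, length_of_mem_dirEdges h]
  congr 1
  rw [← List.sum_toFinset _ (nodup_of_mem_dirEdges h), toFinset_of_mem_dirEdges h,
    Finset.sum_sub_distrib, Finset.sum_const, nsmul_eq_mul]

end aux

/-- the hypergraph Laplacian `Δφ := div(∇φ)` satisfies, at every vertex,
`Δφ(v) = (1/μ v) Σ_{e∋v} (ω e/(δ_e−1)) Σ_{u∈e,u≠v} (φ u − φ v)`. -/
theorem stmt_2 {V : Type*} [Fintype V] [DecidableEq V] [Inhabited V]
    (E : Finset (Finset V)) (ω : Finset V → ℝ) (μ : V → ℝ)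
    (hcard : ∀ e ∈ E, 2 ≤ e.card) (hω : ∀ e ∈ E, 0 < ω e) (hμ : ∀ v : V, 0 < μ v)
    (φ : V → ℝ) (v : V) :
    hDiv E ω μ (hGrad ω φ) v = hLap E ω μ φ v := by
  classical
  -- the first (divergence) sum vanishes edge by edge
  have key1 : ∀ e ∈ E, ∑ l ∈ (dirEdges e).filter (fun l => v ∈ l),
      (Real.sqrt (ω e) / ((Nat.factorial l.length : ℝ) * Real.sqrt ((l.length : ℝ) - 1))) *
        hGrad ω φ l = 0 := by
    intro e he
    by_cases hv : v ∈ e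
    · rw [Finset.filter_true_of_mem (fun l hl => (mem_iff_of_mem_dirEdges hl).mpr hv)]
      have hne : e.Nonempty := ⟨v, hv⟩
      set K : ℝ := Real.sqrt (ω e) / ((Nat.factorial e.card : ℝ) *
        Real.sqrt ((e.card : ℝ) - 1)) * Real.sqrt (ω e / ((e.card : ℝ) - 1)) with hK
      set S : ℝ := ∑ u ∈ e, φ u with hS
      have step : ∀ l ∈ dirEdges e,
          (Real.sqrt (ω e) / ((Nat.factorial l.length : ℝ) * Real.sqrt ((l.length : ℝ) - 1))) *
            hGrad ω φ l = K * S - K * (e.card : ℝ) * φ l.headI := by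
        intro l hl
        rw [hGrad_eval hl, length_of_mem_dirEdges hl, hK]
        ring
      have hfac : (e.card.factorial : ℝ) = (e.card : ℝ) * ((e.card - 1).factorial : ℝ) := by
        rw [← Nat.cast_mul, Nat.mul_factorial_pred (by have := hcard e he; omega : e.card ≠ 0)]
      rw [Finset.sum_congr rfl step, Finset.sum_sub_distrib, Finset.sum_const,
        card_dirEdges, nsmul_eq_mul, ← Finset.mul_sum, sum_headI e hne φ, hfac]
      ring
    · rw [Finset.filter_false_of_mem
        (fun l hl h => hv ((mem_iff_of_mem_dirEdges hl).mp h)), Finset.sum_empty]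
  have key2 : ∀ e ∈ E, ∑ l ∈ (dirEdges e).filter (fun l => l.headI = v),
      ((l.length : ℝ) * Real.sqrt (ω e) / ((Nat.factorial l.length : ℝ) *
        Real.sqrt ((l.length : ℝ) - 1))) * hGrad ω φ l
      = if v ∈ e then (ω e / ((e.card : ℝ) - 1)) * ∑ u ∈ e.erase v, (φ u - φ v) else 0 := by
    intro e he
    have hne : e.Nonempty := Finset.card_pos.mp (by have := hcard e he; omega)
    by_cases hv : v ∈ e
    · rw [if_pos hv]
      set S : ℝ := ∑ u ∈ e, φ u with hS
      have herase : ∑ u ∈ e.erase v, (φ u - φ v) = S - (e.card : ℝ) * φ v := by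
        rw [Finset.sum_erase e (by ring : φ v - φ v = 0), Finset.sum_sub_distrib,
          Finset.sum_const, nsmul_eq_mul, hS]
      have step : ∀ l ∈ (dirEdges e).filter (fun l => l.headI = v),
          ((l.length : ℝ) * Real.sqrt (ω e) / ((Nat.factorial l.length : ℝ) *
            Real.sqrt ((l.length : ℝ) - 1))) * hGrad ω φ l
          = ((e.card : ℝ) * Real.sqrt (ω e) / ((Nat.factorial e.card : ℝ) *
            Real.sqrt ((e.card : ℝ) - 1))) * (Real.sqrt (ω e / ((e.card : ℝ) - 1)) *
            (S - (e.card : ℝ) * φ v)) := by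
        intro l hl
        obtain ⟨hl, hh⟩ := Finset.mem_filter.mp hl
        rw [hGrad_eval hl, length_of_mem_dirEdges hl, hh, hS]
      rw [Finset.sum_congr rfl step, Finset.sum_const, card_fiber e hv, nsmul_eq_mul, herase]
      -- now a pure real computation
      have h2 : (2 : ℕ) ≤ e.card := hcard e he
      have hd1 : (0 : ℝ) < (e.card : ℝ) - 1 := by
        have : (2 : ℝ) ≤ (e.card : ℝ) := by exact_mod_cast h2
        linarith
      have hω' : (0 : ℝ) < ω e := hω e he
      have hfac : (e.card.factorial : ℝ) = (e.card : ℝ) * ((e.card - 1).factorial : ℝ) := by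
        rw [← Nat.cast_mul, Nat.mul_factorial_pred (by omega : e.card ≠ 0)]
      have hsd : Real.sqrt (ω e / ((e.card : ℝ) - 1)) =
          Real.sqrt (ω e) / Real.sqrt ((e.card : ℝ) - 1) := Real.sqrt_div hω'.le _
      have hss : Real.sqrt ((e.card : ℝ) - 1) * Real.sqrt ((e.card : ℝ) - 1) =
          (e.card : ℝ) - 1 := Real.mul_self_sqrt hd1.le
      have hrr : Real.sqrt (ω e) * Real.sqrt (ω e) = ω e := Real.mul_self_sqrt hω'.le
      have hs0 : Real.sqrt ((e.card : ℝ) - 1) ≠ 0 := by positivity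
      have hfac0 : ((e.card - 1).factorial : ℝ) ≠ 0 := by positivity
      rw [hsd, hfac]
      field_simp
      ring_nf
      rw [Real.sq_sqrt hω'.le, Real.sq_sqrt (by linarith : (0:ℝ) ≤ -1 + (e.card : ℝ))]
      ring
    · rw [if_neg hv]
      rw [Finset.filter_false_of_mem (fun l hl h => hv (by
        have h' : l.headI = v := h
        have := headI_mem_of_mem_dirEdges hne hl
        rwa [h'] at this)), Finset.sum_empty]
  unfold hDiv hLap
  rw [Finset.sum_congr rfl key1, Finset.sum_const_zero, mul_zero, zero_add,
    Finset.sum_congr rfl key2, Finset.sum_filter]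
end

section
/- (Integration by parts on hypergraphs) For any functions φ, ψ : V → ℝ on a finite hypergraph, Σ_{v∈V} μ(v) ∇φ(v)·∇ψ(v) = Σ_{v∈V} μ(v)(−Δφ(v))ψ(v), where ∇φ(v)·∇ψ(v) := (1/μ(v)) Σ_{e∋v} (ω_e/(δ_e(δ_e−1))) (Σ_{u∈e}(φ(u)−φ(v)))(Σ_{u∈e}(ψ(u)−ψ(v))) and Δφ(v) = (1/μ(v)) Σ_{e∋v} (ω_e/(δ_e−1)) Σ_{u∈e,u≠v}(φ(u)−φ(v)). -/
/-- Pointwise product of hypergraph gradients: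
`∇φ(v)·∇ψ(v) = (1/μ v) Σ_{e∋v} (ω e/(δ_e(δ_e−1))) (Σ_{u∈e}(φu−φv)) (Σ_{u∈e}(ψu−ψv))`. -/
noncomputable def hGradProd {V : Type*} [DecidableEq V] (E : Finset (Finset V)) (ω : Finset V → ℝ)
    (μ : V → ℝ) (φ ψ : V → ℝ) (v : V) : ℝ :=
  (1 / μ v) * ∑ e ∈ E.filter (fun e => v ∈ e),
    (ω e / ((e.card : ℝ) * ((e.card : ℝ) - 1))) *
      ((∑ u ∈ e, (φ u - φ v)) * (∑ u ∈ e, (ψ u - ψ v)))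
/-- integration by parts:
`Σ_v μ(v) ∇φ(v)·∇ψ(v) = Σ_v μ(v) (−Δφ(v)) ψ(v)`. -/
theorem stmt_3 {V : Type*} [Fintype V] [DecidableEq V]
    (E : Finset (Finset V)) (ω : Finset V → ℝ) (μ : V → ℝ)
    (hcard : ∀ e ∈ E, 2 ≤ e.card) (hω : ∀ e ∈ E, 0 < ω e) (hμ : ∀ v : V, 0 < μ v)
    (φ ψ : V → ℝ) :
    ∑ v, μ v * hGradProd E ω μ φ ψ v = ∑ v, μ v * ((-(hLap E ω μ φ v)) * ψ v) := by
  have h1 : ∀ v : V, μ v ≠ 0 := fun v => (hμ v).ne'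
  have swap : ∀ f : V → Finset V → ℝ,
      (∑ v, ∑ e ∈ E.filter (fun e => v ∈ e), f v e) = ∑ e ∈ E, ∑ v ∈ e, f v e := by
    intro f
    simp only [Finset.sum_filter]
    rw [Finset.sum_comm]
    refine Finset.sum_congr rfl fun e _ => ?_
    rw [Finset.sum_ite_mem, Finset.univ_inter]
  have L : ∑ v, μ v * hGradProd E ω μ φ ψ v
      = ∑ v, ∑ e ∈ E.filter (fun e => v ∈ e),
          (ω e / ((e.card : ℝ) * ((e.card : ℝ) - 1))) *
            ((∑ u ∈ e, (φ u - φ v)) * (∑ u ∈ e, (ψ u - ψ v))) := by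
    refine Finset.sum_congr rfl fun v _ => ?_
    rw [hGradProd, ← mul_assoc, mul_one_div_cancel (h1 v), one_mul]
  have R : ∑ v, μ v * ((-(hLap E ω μ φ v)) * ψ v)
      = ∑ v, ∑ e ∈ E.filter (fun e => v ∈ e),
          -((ω e / ((e.card : ℝ) - 1)) * (∑ u ∈ e.erase v, (φ u - φ v)) * ψ v) := by
    refine Finset.sum_congr rfl fun v _ => ?_
    have key : ∀ a b c : ℝ, a ≠ 0 → a * (-(1 / a * b) * c) = -(b * c) := by
      intro a b c ha
      field_simp
    rw [hLap, key _ _ _ (h1 v), Finset.sum_neg_distrib, ← Finset.sum_mul]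
  rw [L, R, swap, swap]
  refine Finset.sum_congr rfl fun e he => ?_
  have hd2 : (2 : ℝ) ≤ (e.card : ℝ) := by exact_mod_cast hcard e he
  have hd0 : (e.card : ℝ) ≠ 0 := by linarith
  have hd1 : (e.card : ℝ) - 1 ≠ 0 := by linarith
  have hc : ω e / ((e.card : ℝ) * ((e.card : ℝ) - 1)) * (e.card : ℝ)
      = ω e / ((e.card : ℝ) - 1) := by
    field_simp
  -- rewrite erase sums to full sums
  have herase : ∀ v ∈ e, (∑ u ∈ e.erase v, (φ u - φ v)) = ∑ u ∈ e, (φ u - φ v) := by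
    intro v _
    exact Finset.sum_erase _ (sub_self _)
  have hfull : ∀ (f : V → ℝ) (v : V),
      (∑ u ∈ e, (f u - f v)) = (∑ u ∈ e, f u) - (e.card : ℝ) * f v := by
    intro f v
    rw [Finset.sum_sub_distrib, Finset.sum_const, nsmul_eq_mul]
  have hzero : ∑ v ∈ e, ((∑ u ∈ e, φ u) - (e.card : ℝ) * φ v) = 0 := by
    rw [Finset.sum_sub_distrib, Finset.sum_const, nsmul_eq_mul, ← Finset.mul_sum, sub_self]
  calc
    ∑ v ∈ e, (ω e / ((e.card : ℝ) * ((e.card : ℝ) - 1))) *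
        ((∑ u ∈ e, (φ u - φ v)) * (∑ u ∈ e, (ψ u - ψ v)))
      = ∑ v ∈ e, ((ω e / ((e.card : ℝ) * ((e.card : ℝ) - 1))) * (∑ u ∈ e, ψ u) *
            ((∑ u ∈ e, φ u) - (e.card : ℝ) * φ v)
          + -((ω e / ((e.card : ℝ) - 1)) *
              ((∑ u ∈ e, φ u) - (e.card : ℝ) * φ v) * ψ v)) := by
        refine Finset.sum_congr rfl fun v _ => ?_
        rw [hfull φ v, hfull ψ v, ← hc]
        ring
    _ = ∑ v ∈ e, -((ω e / ((e.card : ℝ) - 1)) *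
          ((∑ u ∈ e, φ u) - (e.card : ℝ) * φ v) * ψ v) := by
        rw [Finset.sum_add_distrib, ← Finset.mul_sum, hzero, mul_zero, zero_add]
    _ = ∑ v ∈ e, -((ω e / ((e.card : ℝ) - 1)) * (∑ u ∈ e.erase v, (φ u - φ v)) * ψ v) := by
        refine Finset.sum_congr rfl fun v hv => ?_
        rw [herase v hv, hfull φ v]
end

section
/- (Weak maximum principle) Let H = (V, E) be a finite hypergraph and c : V → ℝ with c(v) > 0 for all v. If φ : V → ℝ satisfies −Δφ(v) + c(v)φ(v) ≥ 0 for all v ∈ V, then φ(v) ≥ 0 for all v ∈ V. -/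
/-- weak maximum principle: if `c > 0` on `V` and
`−Δφ + cφ ≥ 0` on `V`, then `φ ≥ 0` on `V`. -/
theorem stmt_5 {V : Type*} [Fintype V] [DecidableEq V]
    (E : Finset (Finset V)) (ω : Finset V → ℝ) (μ : V → ℝ)
    (hcard : ∀ e ∈ E, 2 ≤ e.card) (hω : ∀ e ∈ E, 0 < ω e) (hμ : ∀ v : V, 0 < μ v)
    (c : V → ℝ) (hc : ∀ v, 0 < c v)
    (φ : V → ℝ) (hφ : ∀ v, 0 ≤ -(hLap E ω μ φ v) + c v * φ v) :
    ∀ v, 0 ≤ φ v := by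
  intro v
  have : Nonempty V := ⟨v⟩
  obtain ⟨v0, -, hv0⟩ := Finset.exists_min_image Finset.univ φ ⟨v, Finset.mem_univ v⟩
  have hmin : ∀ u, φ v0 ≤ φ u := fun u => hv0 u (Finset.mem_univ u)
  have hΔ : 0 ≤ hLap E ω μ φ v0 := by
    unfold hLap
    apply mul_nonneg (le_of_lt (by have := hμ v0; positivity))
    apply Finset.sum_nonneg
    intro e he
    rw [Finset.mem_filter] at he
    apply mul_nonneg
    · apply div_nonneg (le_of_lt (hω e he.1))
      have : (2 : ℝ) ≤ (e.card : ℝ) := by exact_mod_cast hcard e he.1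
      linarith
    · exact Finset.sum_nonneg fun u _ => sub_nonneg.2 (hmin u)
  have h0 : 0 ≤ c v0 * φ v0 := le_trans (by linarith [hφ v0]) (by linarith [hφ v0])
  have hφ0 : 0 ≤ φ v0 := nonneg_of_mul_nonneg_right h0 (hc v0)
  exact le_trans hφ0 (hmin v)
end

section
/- Let H = (V, E) be a connected finite hypergraph. If φ : V → ℝ satisfies −Δφ(v) ≥ 0 for all v ∈ V, then the negative part φ⁻ = min{φ, 0} is a constant function on V. -/
/-- Connectedness of a hypergraph: any two distinct vertices are joined by a
hyperpath, i.e. a sequence of hyperedges with consecutive nonempty intersections. -/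
def hConnected {V : Type*} [DecidableEq V] (E : Finset (Finset V)) : Prop :=
  ∀ u v : V, u ≠ v → ∃ γ : List (Finset V), ∃ hγ : γ ≠ [],
    (∀ e ∈ γ, e ∈ E) ∧ γ.Chain' (fun a b => (a ∩ b).Nonempty) ∧
    u ∈ γ.head hγ ∧ v ∈ γ.getLast hγ

/-- Local minimum principle: if `w` attains the global minimum of `φ`, then `φ` is
constant equal to that minimum on every hyperedge containing `w`. -/
lemma hLap_local_min {V : Type*} [Fintype V] [DecidableEq V]
    (E : Finset (Finset V)) (ω : Finset V → ℝ) (μ : V → ℝ)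
    (hcard : ∀ e ∈ E, 2 ≤ e.card) (hω : ∀ e ∈ E, 0 < ω e) (hμ : ∀ v : V, 0 < μ v)
    (φ : V → ℝ) (hφ : ∀ v, 0 ≤ -(hLap E ω μ φ v))
    (m : ℝ) (hm : ∀ x : V, m ≤ φ x) (w : V) (hw : φ w = m)
    (e : Finset V) (he : e ∈ E) (hwe : w ∈ e) : ∀ x ∈ e, φ x = m := by
  -- coefficients are positive
  have hcoef : ∀ f ∈ E, 0 < ω f / ((f.card : ℝ) - 1) := by
    intro f hf
    apply div_pos (hω f hf)
    have : (2 : ℝ) ≤ (f.card : ℝ) := by exact_mod_cast hcard f hf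
    linarith
  -- inner sums are nonneg
  have hinner : ∀ f : Finset V, 0 ≤ ∑ u ∈ f.erase w, (φ u - φ w) := by
    intro f
    apply Finset.sum_nonneg
    intro u _
    have := hm u
    linarith [hw ▸ this]
  have hterm : ∀ f ∈ E.filter (fun f => w ∈ f),
      0 ≤ (ω f / ((f.card : ℝ) - 1)) * ∑ u ∈ f.erase w, (φ u - φ w) := by
    intro f hf
    exact mul_nonneg (le_of_lt (hcoef f (Finset.mem_filter.mp hf).1)) (hinner f)
  -- the total sum is ≤ 0
  have hS : (∑ f ∈ E.filter (fun f => w ∈ f),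
      (ω f / ((f.card : ℝ) - 1)) * ∑ u ∈ f.erase w, (φ u - φ w)) ≤ 0 := by
    have h1 := hφ w
    unfold hLap at h1
    have hμw : 0 < 1 / μ w := div_pos one_pos (hμ w)
    nlinarith [hμw, h1]
  have hS0 : (∑ f ∈ E.filter (fun f => w ∈ f),
      (ω f / ((f.card : ℝ) - 1)) * ∑ u ∈ f.erase w, (φ u - φ w)) = 0 :=
    le_antisymm hS (Finset.sum_nonneg hterm)
  have hterm0 := (Finset.sum_eq_zero_iff_of_nonneg hterm).mp hS0
  have heF : e ∈ E.filter (fun f => w ∈ f) := Finset.mem_filter.mpr ⟨he, hwe⟩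
  have he0 : (ω e / ((e.card : ℝ) - 1)) * ∑ u ∈ e.erase w, (φ u - φ w) = 0 := hterm0 e heF
  have hsum0 : ∑ u ∈ e.erase w, (φ u - φ w) = 0 := by
    rcases mul_eq_zero.mp he0 with h | h
    · exact absurd h (ne_of_gt (hcoef e he))
    · exact h
  have hall := (Finset.sum_eq_zero_iff_of_nonneg (fun u _ => by
      have := hm u; have hwm := hw; linarith [hwm ▸ this] :
      ∀ u ∈ e.erase w, 0 ≤ φ u - φ w)).mp hsum0
  intro x hx
  by_cases hxw : x = w
  · rw [hxw, hw]
  · have := hall x (Finset.mem_erase.mpr ⟨hxw, hx⟩)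
    have : φ x = φ w := by linarith
    rw [this, hw]

/-- Propagation along a hyperpath. -/
lemma hLap_path_min {V : Type*} [Fintype V] [DecidableEq V]
    (E : Finset (Finset V)) (ω : Finset V → ℝ) (μ : V → ℝ)
    (hcard : ∀ e ∈ E, 2 ≤ e.card) (hω : ∀ e ∈ E, 0 < ω e) (hμ : ∀ v : V, 0 < μ v)
    (φ : V → ℝ) (hφ : ∀ v, 0 ≤ -(hLap E ω μ φ v))
    (m : ℝ) (hm : ∀ x : V, m ≤ φ x) :
    ∀ γ : List (Finset V), ∀ hγ : γ ≠ [], (∀ e ∈ γ, e ∈ E) →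
      γ.Chain' (fun a b => (a ∩ b).Nonempty) →
      (∃ w ∈ γ.head hγ, φ w = m) → ∀ y ∈ γ.getLast hγ, φ y = m := by
  intro γ
  induction γ with
  | nil => intro hγ; exact absurd rfl hγ
  | cons e rest ih =>
    intro hγ hmem hchain hw y hy
    obtain ⟨w, hwe, hwm⟩ := hw
    have hconst : ∀ x ∈ e, φ x = m :=
      hLap_local_min E ω μ hcard hω hμ φ hφ m hm w hwm e (hmem e (by simp)) hwe
    cases rest with
    | nil => exact hconst y (by simpa using hy)
    | cons e' rest' =>
      have hchain' := hchain
      rw [List.Chain', List.isChain_cons_cons] at hchain'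
      obtain ⟨hint, hchainrest⟩ := hchain'
      obtain ⟨w', hw'⟩ := hint
      have hw'e : w' ∈ e := (Finset.mem_inter.mp hw').1
      have hw'e' : w' ∈ e' := (Finset.mem_inter.mp hw').2
      have hlast : (e :: e' :: rest').getLast hγ = (e' :: rest').getLast (by simp) := by
        simp [List.getLast_cons]
      apply ih (by simp) (fun f hf => hmem f (by simp [hf])) hchainrest
        ⟨w', by simpa using hw'e', hconst w' hw'e⟩
      rw [← hlast]; exact hy

/-- on a connected finite hypergraph, if `−Δφ ≥ 0` everywhere then the
negative part `φ⁻ = min{φ, 0}` is a constant function on `V`. -/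
theorem stmt_7 {V : Type*} [Fintype V] [DecidableEq V]
    (E : Finset (Finset V)) (ω : Finset V → ℝ) (μ : V → ℝ)
    (hcard : ∀ e ∈ E, 2 ≤ e.card) (hω : ∀ e ∈ E, 0 < ω e) (hμ : ∀ v : V, 0 < μ v)
    (hconn : hConnected E)
    (φ : V → ℝ) (hφ : ∀ v, 0 ≤ -(hLap E ω μ φ v)) :
    ∀ u v : V, min (φ u) 0 = min (φ v) 0 := by
  intro u v
  haveI : Nonempty V := ⟨u⟩
  set m := Finset.univ.inf' Finset.univ_nonempty φ with hmdef
  have hm : ∀ x : V, m ≤ φ x := fun x => Finset.inf'_le φ (Finset.mem_univ x)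
  by_cases hm0 : 0 ≤ m
  · have h1 : min (φ u) 0 = 0 := min_eq_right (le_trans hm0 (hm u))
    have h2 : min (φ v) 0 = 0 := min_eq_right (le_trans hm0 (hm v))
    rw [h1, h2]
  · -- m < 0; show φ is constant = m
    obtain ⟨w0, _, hw0⟩ := Finset.exists_mem_eq_inf' Finset.univ_nonempty φ
    have hconst : ∀ x : V, φ x = m := by
      intro x
      by_cases hxw : x = w0
      · rw [hxw, ← hw0]
      · obtain ⟨γ, hγ, hmem, hchain, hhead, hlast⟩ := hconn w0 x (fun h => hxw h.symm)
        exact hLap_path_min E ω μ hcard hω hμ φ hφ m hm γ hγ hmem hchain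
          ⟨w0, hhead, hw0.symm⟩ x hlast
    rw [hconst u, hconst v]
end

section
/- (Strong maximum principle) Let H = (V, E) be a connected finite hypergraph and c : V → ℝ with c(v) ≥ 0 for all v. Suppose φ : V → ℝ satisfies φ ≥ 0 on V and −Δφ(v) + c(v)φ(v) ≥ 0 for all v ∈ V. If φ(v₀) = 0 for some v₀ ∈ V, then φ ≡ 0 on V. -/
theorem zero_spread {V : Type*} [Fintype V] [DecidableEq V]
    (E : Finset (Finset V)) (ω : Finset V → ℝ) (μ : V → ℝ)
    (hcard : ∀ e ∈ E, 2 ≤ e.card) (hω : ∀ e ∈ E, 0 < ω e) (hμ : ∀ v : V, 0 < μ v)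
    (c : V → ℝ)
    (φ : V → ℝ) (hpos : ∀ v, 0 ≤ φ v)
    (hφ : ∀ v, 0 ≤ -(hLap E ω μ φ v) + c v * φ v)
    (v : V) (hv : φ v = 0) (e : Finset V) (heE : e ∈ E) (hve : v ∈ e) :
    ∀ u ∈ e, φ u = 0 := by
  have hΔle : hLap E ω μ φ v ≤ 0 := by
    have := hφ v
    rw [hv] at this; linarith
  have hterm : ∀ f ∈ E.filter (fun f => v ∈ f),
      0 ≤ (ω f / ((f.card : ℝ) - 1)) * ∑ u ∈ f.erase v, (φ u - φ v) := by
    intro f hf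
    rw [Finset.mem_filter] at hf
    apply mul_nonneg
    · apply div_nonneg (hω f hf.1).le
      have := hcard f hf.1
      have : (2 : ℝ) ≤ f.card := by exact_mod_cast this
      linarith
    · apply Finset.sum_nonneg
      intro u _
      rw [hv]; simpa using hpos u
  have hsum0 : ∑ f ∈ E.filter (fun f => v ∈ f),
      (ω f / ((f.card : ℝ) - 1)) * ∑ u ∈ f.erase v, (φ u - φ v) = 0 := by
    have hS := Finset.sum_nonneg hterm
    by_contra h
    have hSpos : 0 < ∑ f ∈ E.filter (fun f => v ∈ f),
        (ω f / ((f.card : ℝ) - 1)) * ∑ u ∈ f.erase v, (φ u - φ v) :=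
      lt_of_le_of_ne hS (Ne.symm h)
    have hμv := hμ v
    have : 0 < hLap E ω μ φ v := by
      unfold hLap
      positivity
    linarith
  have heach := (Finset.sum_eq_zero_iff_of_nonneg hterm).mp hsum0
  have he : (ω e / ((e.card : ℝ) - 1)) * ∑ u ∈ e.erase v, (φ u - φ v) = 0 :=
    heach e (Finset.mem_filter.mpr ⟨heE, hve⟩)
  have hcoef : 0 < ω e / ((e.card : ℝ) - 1) := by
    apply div_pos (hω e heE)
    have : (2 : ℝ) ≤ e.card := by exact_mod_cast hcard e heE
    linarith
  have hsum : ∑ u ∈ e.erase v, (φ u - φ v) = 0 := by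
    rcases mul_eq_zero.mp he with h | h
    · exact absurd h hcoef.ne'
    · exact h
  have hnn : ∀ u ∈ e.erase v, 0 ≤ φ u - φ v := by
    intro u _; rw [hv]; simpa using hpos u
  have hall := (Finset.sum_eq_zero_iff_of_nonneg hnn).mp hsum
  intro u hu
  by_cases huv : u = v
  · rw [huv, hv]
  · have := hall u (Finset.mem_erase.mpr ⟨huv, hu⟩)
    rw [hv] at this; linarith

/-- strong maximum principle: on a connected finite hypergraph, if
`c ≥ 0`, `φ ≥ 0`, `−Δφ + cφ ≥ 0` on `V`, and `φ(v₀) = 0` for some `v₀`, then `φ ≡ 0`. -/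
theorem stmt_9 {V : Type*} [Fintype V] [DecidableEq V]
    (E : Finset (Finset V)) (ω : Finset V → ℝ) (μ : V → ℝ)
    (hcard : ∀ e ∈ E, 2 ≤ e.card) (hω : ∀ e ∈ E, 0 < ω e) (hμ : ∀ v : V, 0 < μ v)
    (hconn : hConnected E)
    (c : V → ℝ) (hc : ∀ v, 0 ≤ c v)
    (φ : V → ℝ) (hpos : ∀ v, 0 ≤ φ v)
    (hφ : ∀ v, 0 ≤ -(hLap E ω μ φ v) + c v * φ v)
    (v₀ : V) (hv₀ : φ v₀ = 0) :
    ∀ v, φ v = 0 := by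
  have spread := zero_spread E ω μ hcard hω hμ c φ hpos hφ
  have key : ∀ γ : List (Finset V), ∀ hγ : γ ≠ [], (∀ e ∈ γ, e ∈ E) →
      γ.Chain' (fun a b => (a ∩ b).Nonempty) →
      (∃ w ∈ γ.head hγ, φ w = 0) → ∀ u ∈ γ.getLast hγ, φ u = 0 := by
    intro γ
    induction γ with
    | nil => intro h; exact absurd rfl h
    | cons e rest ih =>
      intro hγ hE hchain hw u hu
      obtain ⟨w, hwe, hw0⟩ := hw
      simp only [List.head_cons] at hwe
      have heE : e ∈ E := hE e List.mem_cons_self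
      have hezero : ∀ x ∈ e, φ x = 0 := spread w hw0 e heE hwe
      cases rest with
      | nil =>
        simp only [List.getLast_singleton] at hu
        exact hezero u hu
      | cons f rest' =>
        have hne : f :: rest' ≠ [] := by simp
        have hlast : (e :: f :: rest').getLast hγ = (f :: rest').getLast hne := by
          simp [List.getLast_cons]
        rw [hlast] at hu
        have hchain' : (f :: rest').Chain' (fun a b => (a ∩ b).Nonempty) :=
          (List.isChain_cons_cons.mp hchain).2
        obtain ⟨x, hx⟩ : (e ∩ f).Nonempty := (List.isChain_cons_cons.mp hchain).1
        rw [Finset.mem_inter] at hx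
        exact ih hne (fun g hg => hE g (List.mem_cons_of_mem e hg)) hchain'
          ⟨x, by simpa using hx.2, hezero x hx.1⟩ u hu
  intro v
  by_cases hvv : v = v₀
  · rw [hvv]; exact hv₀
  · obtain ⟨γ, hγ, hE, hchain, hh, hl⟩ := hconn v₀ v (Ne.symm hvv)
    exact key γ hγ hE hchain ⟨v₀, hh, hv₀⟩ v hl
end

section
/- (Existence for the Dirichlet problem) Let H = (V, E) be a connected finite hypergraph and Ω ⊊ V nonempty with nonempty complement. For any f : Ω → ℝ, there exists a function φ : V → ℝ with φ = 0 on Ω^c and −Δφ(v) = f(v) for all v ∈ Ω. -/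
noncomputable def hB {V : Type*} [DecidableEq V] (E : Finset (Finset V)) (c : Finset V → ℝ)
    (φ : V → ℝ) (v : V) : ℝ :=
  ∑ e ∈ E.filter (fun e => v ∈ e), c e * ∑ u ∈ e.erase v, (φ u - φ v)

lemma sum_erase_comm {V : Type*} [DecidableEq V] (e : Finset V) (F : V → V → ℝ) :
    ∑ v ∈ e, ∑ u ∈ e.erase v, F v u = ∑ v ∈ e, ∑ u ∈ e.erase v, F u v := by
  have h : ∀ G : V → V → ℝ, ∑ v ∈ e, ∑ u ∈ e.erase v, G v u
      = ∑ v ∈ e, ∑ u ∈ e, if u ≠ v then G v u else 0 := by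
    intro G
    refine Finset.sum_congr rfl fun v hv => ?_
    rw [← Finset.filter_ne' e v, Finset.sum_filter]
  rw [h, h, Finset.sum_comm]
  refine Finset.sum_congr rfl fun v hv => Finset.sum_congr rfl fun u hu => ?_
  exact if_congr (not_congr eq_comm) rfl rfl

lemma energy {V : Type*} [Fintype V] [DecidableEq V] (E : Finset (Finset V))
    (c : Finset V → ℝ) (φ : V → ℝ) :
    2 * ∑ v, φ v * hB E c φ v
      = -∑ e ∈ E, c e * ∑ v ∈ e, ∑ u ∈ e.erase v, (φ u - φ v) ^ 2 := by
  have step1 : ∑ v, φ v * hB E c φ v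
      = ∑ e ∈ E, c e * ∑ v ∈ e, ∑ u ∈ e.erase v, φ v * (φ u - φ v) := by
    simp only [hB, Finset.mul_sum, Finset.sum_filter, mul_ite, mul_zero]
    rw [Finset.sum_comm]
    refine Finset.sum_congr rfl fun e he => ?_
    rw [Finset.sum_ite_mem, Finset.univ_inter]
    exact Finset.sum_congr rfl fun v hv => Finset.sum_congr rfl fun u hu => by ring
  rw [step1, ← Finset.sum_neg_distrib, Finset.mul_sum]
  refine Finset.sum_congr rfl fun e he => ?_
  have h2 : 2 * (c e * ∑ v ∈ e, ∑ u ∈ e.erase v, φ v * (φ u - φ v))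
      = c e * ((∑ v ∈ e, ∑ u ∈ e.erase v, φ v * (φ u - φ v))
        + ∑ v ∈ e, ∑ u ∈ e.erase v, φ u * (φ v - φ u)) := by
    rw [← sum_erase_comm e (fun v u => φ u * (φ v - φ u))]
    ring
  rw [h2, ← mul_neg]
  congr 1
  rw [← Finset.sum_add_distrib, ← Finset.sum_neg_distrib]
  refine Finset.sum_congr rfl fun v hv => ?_
  rw [← Finset.sum_add_distrib, ← Finset.sum_neg_distrib]
  refine Finset.sum_congr rfl fun u hu => by ring

lemma const_on_path {V : Type*} [DecidableEq V] (E : Finset (Finset V)) (φ : V → ℝ)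
    (hedge : ∀ e ∈ E, ∀ u ∈ e, ∀ v ∈ e, φ u = φ v) :
    ∀ (γ : List (Finset V)) (hγ : γ ≠ []), (∀ e ∈ γ, e ∈ E) →
      γ.Chain' (fun a b => (a ∩ b).Nonempty) →
      ∀ x ∈ γ.head hγ, ∀ y ∈ γ.getLast hγ, φ x = φ y := by
  intro γ
  induction γ with
  | nil => intro h; exact absurd rfl h
  | cons e rest ih =>
    intro _ hmem hchain x hx y hy
    cases rest with
    | nil =>
      simp only [List.head_cons] at hx
      simp only [List.getLast_singleton] at hy
      exact hedge e (hmem e (by simp)) x hx y hy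
    | cons e' rest' =>
      have hch := List.isChain_cons_cons.mp hchain
      obtain ⟨z, hz⟩ := hch.1
      have hz1 : z ∈ e := (Finset.mem_inter.mp hz).1
      have hz2 : z ∈ e' := (Finset.mem_inter.mp hz).2
      have h1 : φ x = φ z := hedge e (hmem e (by simp)) x (by simpa using hx) z hz1
      rw [List.getLast_cons (by simp)] at hy
      have h2 : φ z = φ y :=
        ih (by simp) (fun a ha => hmem a (List.mem_cons_of_mem _ ha)) hch.2
          z (by simpa using hz2) y hy
      exact h1.trans h2

noncomputable def hBL {V : Type*} [Fintype V] [DecidableEq V] (E : Finset (Finset V))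
    (c : Finset V → ℝ) : (V → ℝ) →ₗ[ℝ] (V → ℝ) where
  toFun φ := hB E c φ
  map_add' φ φ' := by
    funext v
    simp only [hB, Pi.add_apply, ← Finset.sum_add_distrib]
    refine Finset.sum_congr rfl fun e he => ?_
    rw [← mul_add, ← Finset.sum_add_distrib]
    congr 1
    exact Finset.sum_congr rfl fun u hu => by ring
  map_smul' r φ := by
    funext v
    simp only [hB, Pi.smul_apply, smul_eq_mul, RingHom.id_apply, Finset.mul_sum]
    refine Finset.sum_congr rfl fun e he => ?_
    exact Finset.sum_congr rfl fun u hu => by ring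

noncomputable def extZ {V : Type*} [DecidableEq V] (Ω : Finset V) :
    (↥Ω → ℝ) →ₗ[ℝ] (V → ℝ) where
  toFun ψ v := if h : v ∈ Ω then ψ ⟨v, h⟩ else 0
  map_add' ψ ψ' := by funext v; by_cases h : v ∈ Ω <;> simp [h]
  map_smul' r ψ := by funext v; by_cases h : v ∈ Ω <;> simp [h]

/-- existence for the Dirichlet problem: for any `f` there exists
`φ : V → ℝ` with `φ = 0` on `Ωᶜ` and `−Δφ = f` on `Ω`. -/
theorem stmt_14 {V : Type*} [Fintype V] [DecidableEq V]
    (E : Finset (Finset V)) (ω : Finset V → ℝ) (μ : V → ℝ)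
    (hcard : ∀ e ∈ E, 2 ≤ e.card) (hω : ∀ e ∈ E, 0 < ω e) (hμ : ∀ v : V, 0 < μ v)
    (hconn : hConnected E)
    (Ω : Finset V) (hΩ : Ω.Nonempty) (hΩc : Ωᶜ.Nonempty)
    (f : V → ℝ) :
    ∃ φ : V → ℝ, (∀ v ∉ Ω, φ v = 0) ∧ ∀ v ∈ Ω, -(hLap E ω μ φ v) = f v := by
  classical
  set c : Finset V → ℝ := fun e => ω e / ((e.card : ℝ) - 1) with hc
  have hcpos : ∀ e ∈ E, 0 < c e := by
    intro e he
    have h2 : (2 : ℝ) ≤ (e.card : ℝ) := by exact_mod_cast hcard e he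
    exact div_pos (hω e he) (by linarith)
  set M : (↥Ω → ℝ) →ₗ[ℝ] (↥Ω → ℝ) :=
    (LinearMap.funLeft ℝ ℝ (Subtype.val : ↥Ω → V)).comp ((hBL E c).comp (extZ Ω)) with hM
  -- injectivity of M
  have hinj : Function.Injective M := by
    rw [← LinearMap.ker_eq_bot, LinearMap.ker_eq_bot']
    intro ψ hψ
    set φ := extZ Ω ψ with hφ
    have hzero : ∀ v ∉ Ω, φ v = 0 := by
      intro v hv; simp [hφ, extZ, hv]
    have hBzero : ∀ v ∈ Ω, hB E c φ v = 0 := by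
      intro v hv
      have := congrFun hψ ⟨v, hv⟩
      simpa [hM, LinearMap.funLeft, hBL] using this
    have hsum : ∑ v, φ v * hB E c φ v = 0 := by
      refine Finset.sum_eq_zero fun v _ => ?_
      by_cases hv : v ∈ Ω
      · rw [hBzero v hv, mul_zero]
      · rw [hzero v hv, zero_mul]
    have hE := energy E c φ
    rw [hsum, mul_zero] at hE
    have hQ : ∑ e ∈ E, c e * ∑ v ∈ e, ∑ u ∈ e.erase v, (φ u - φ v) ^ 2 = 0 := by
      linarith
    have hterm : ∀ e ∈ E, c e * ∑ v ∈ e, ∑ u ∈ e.erase v, (φ u - φ v) ^ 2 = 0 := by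
      rw [Finset.sum_eq_zero_iff_of_nonneg] at hQ
      · exact hQ
      · intro e he
        exact mul_nonneg (hcpos e he).le <| Finset.sum_nonneg fun v _ =>
          Finset.sum_nonneg fun u _ => sq_nonneg _
    have hedge : ∀ e ∈ E, ∀ u ∈ e, ∀ v ∈ e, φ u = φ v := by
      intro e he u hu v hv
      rcases eq_or_ne u v with rfl | huv
      · rfl
      have hQe : ∑ v ∈ e, ∑ u ∈ e.erase v, (φ u - φ v) ^ 2 = 0 := by
        have := hterm e he
        rcases mul_eq_zero.mp this with h | h
        · exact absurd h (hcpos e he).ne'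
        · exact h
      have h1 : ∀ v ∈ e, ∀ u ∈ e.erase v, (φ u - φ v) ^ 2 = 0 := by
        rw [Finset.sum_eq_zero_iff_of_nonneg
          (fun v _ => Finset.sum_nonneg fun u _ => sq_nonneg _)] at hQe
        intro v hv
        have := hQe v hv
        rw [Finset.sum_eq_zero_iff_of_nonneg (fun u _ => sq_nonneg _)] at this
        exact this
      have := h1 v hv u (Finset.mem_erase.mpr ⟨huv, hu⟩)
      have := pow_eq_zero_iff (n := 2) (by norm_num) |>.mp this
      linarith [sub_eq_zero.mp this]
    -- φ is zero everywhere
    have hφ0 : ∀ v, φ v = 0 := by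
      intro v
      by_cases hv : v ∈ Ω
      · obtain ⟨w, hw⟩ := hΩc
        have hwΩ : w ∉ Ω := Finset.mem_compl.mp hw
        have hvw : v ≠ w := fun h => hwΩ (h ▸ hv)
        obtain ⟨γ, hγ, hmem, hchain, hhead, hlast⟩ := hconn v w hvw
        have := const_on_path E φ hedge γ hγ hmem hchain v hhead w hlast
        rw [this, hzero w hwΩ]
      · exact hzero v hv
    funext x
    have := hφ0 x
    simpa [hφ, extZ] using this
  have hsurj : Function.Surjective M := (LinearMap.injective_iff_surjective).mp hinj
  obtain ⟨ψ, hψ⟩ := hsurj (fun v => -(μ v * f v))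
  refine ⟨extZ Ω ψ, fun v hv => by simp [extZ, hv], fun v hv => ?_⟩
  have h1 : hB E c (extZ Ω ψ) v = -(μ v * f v) := by
    have := congrFun hψ ⟨v, hv⟩
    simpa [hM, LinearMap.funLeft, hBL] using this
  have h2 : hLap E ω μ (extZ Ω ψ) v = (1 / μ v) * hB E c (extZ Ω ψ) v := rfl
  rw [h2, h1, mul_neg, neg_neg, one_div, inv_mul_cancel_left₀ (hμ v).ne']
end

section
/- (Positivity of solutions) Let H = (V, E) be a connected finite hypergraph, h : V → ℝ with h > 0, and f : V × ℝ → ℝ with f(v, s) ≥ 0 for s ≥ 0 and f(v, 0) = 0. If φ : V → ℝ is a nontrivial (not identically zero) solution of −Δφ(v) + h(v)φ(v) = f(v, φ⁺(v)) for all v ∈ V, where φ⁺ = max{φ, 0}, then φ(v) > 0 for all v ∈ V, and hence φ solves −Δφ + hφ = f(v, φ). -/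
/-- positivity of solutions: on a connected finite hypergraph, if
`h > 0`, `f(v,s) ≥ 0` for `s ≥ 0`, `f(v,0) = 0`, and `φ` is a nontrivial solution of
`−Δφ + hφ = f(v, φ⁺)`, then `φ > 0` on `V` and hence `φ` solves `−Δφ + hφ = f(v, φ)`. -/
theorem stmt_17 {V : Type*} [Fintype V] [DecidableEq V]
    (E : Finset (Finset V)) (ω : Finset V → ℝ) (μ : V → ℝ)
    (hcard : ∀ e ∈ E, 2 ≤ e.card) (hω : ∀ e ∈ E, 0 < ω e) (hμ : ∀ v : V, 0 < μ v)
    (hconn : hConnected E)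
    (h : V → ℝ) (hh : ∀ v, 0 < h v)
    (f : V → ℝ → ℝ) (hf₁ : ∀ v s, 0 ≤ s → 0 ≤ f v s) (hf₂ : ∀ v, f v 0 = 0)
    (φ : V → ℝ) (hne : φ ≠ 0)
    (hsol : ∀ v, -(hLap E ω μ φ v) + h v * φ v = f v (max (φ v) 0)) :
    (∀ v, 0 < φ v) ∧ ∀ v, -(hLap E ω μ φ v) + h v * φ v = f v (φ v) := by
  classical
  obtain ⟨w, hw⟩ := Function.ne_iff.mp hne
  have hw' : φ w ≠ 0 := by simpa using hw
  have : Nonempty V := ⟨w⟩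
  obtain ⟨v₀, -, hmin⟩ := Finset.exists_min_image Finset.univ φ Finset.univ_nonempty
  -- Step 1: φ ≥ 0
  have hnn : ∀ v, 0 ≤ φ v := by
    have h0 : 0 ≤ φ v₀ := by
      by_contra hneg
      push_neg at hneg
      have hmax : max (φ v₀) 0 = 0 := max_eq_right hneg.le
      have hs := hsol v₀
      rw [hmax, hf₂] at hs
      have hΔ : 0 ≤ hLap E ω μ φ v₀ := by
        unfold hLap
        apply mul_nonneg (le_of_lt (one_div_pos.mpr (hμ v₀)))
        apply Finset.sum_nonneg
        intro e he
        have heE := (Finset.mem_filter.mp he).1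
        have hc2 : (2 : ℝ) ≤ e.card := by exact_mod_cast hcard e heE
        apply mul_nonneg
        · exact div_nonneg (hω e heE).le (by linarith)
        · apply Finset.sum_nonneg
          intro u hu
          have := hmin u (Finset.mem_univ u)
          linarith
      have := mul_neg_of_pos_of_neg (hh v₀) hneg
      linarith
    intro v
    exact le_trans h0 (hmin v (Finset.mem_univ v))
  -- Zero propagation along edges
  have hzero : ∀ v, φ v = 0 → ∀ e ∈ E, v ∈ e → ∀ u ∈ e, φ u = 0 := by
    intro v hv e heE hve u hue
    have hmax : max (φ v) 0 = 0 := by simp [hv]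
    have hs := hsol v
    rw [hmax, hf₂, hv, mul_zero, add_zero] at hs
    have hΔ0 : hLap E ω μ φ v = 0 := by linarith
    unfold hLap at hΔ0
    have h1 : (1 / μ v) ≠ 0 := (one_div_pos.mpr (hμ v)).ne'
    have hsum : ∑ e' ∈ E.filter (fun e' => v ∈ e'),
        (ω e' / ((e'.card : ℝ) - 1)) * ∑ u' ∈ e'.erase v, (φ u' - φ v) = 0 := by
      rcases mul_eq_zero.mp hΔ0 with h' | h'
      · exact absurd h' h1
      · exact h'
    have hterm : ∀ e' ∈ E.filter (fun e' => v ∈ e'),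
        0 ≤ (ω e' / ((e'.card : ℝ) - 1)) * ∑ u' ∈ e'.erase v, (φ u' - φ v) := by
      intro e' he'
      have he'E := (Finset.mem_filter.mp he').1
      have hc2 : (2 : ℝ) ≤ e'.card := by exact_mod_cast hcard e' he'E
      apply mul_nonneg (div_nonneg (hω e' he'E).le (by linarith))
      apply Finset.sum_nonneg
      intro u' hu'
      have := hnn u'
      linarith [hv]
    have hmem : e ∈ E.filter (fun e' => v ∈ e') := Finset.mem_filter.mpr ⟨heE, hve⟩
    have hteq := (Finset.sum_eq_zero_iff_of_nonneg hterm).mp hsum e hmem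
    have hc2 : (2 : ℝ) ≤ e.card := by exact_mod_cast hcard e heE
    have hpos : 0 < ω e / ((e.card : ℝ) - 1) := div_pos (hω e heE) (by linarith)
    have hinner : ∑ u' ∈ e.erase v, (φ u' - φ v) = 0 := by
      rcases mul_eq_zero.mp hteq with h' | h'
      · exact absurd h' hpos.ne'
      · exact h'
    by_cases huv : u = v
    · rw [huv]; exact hv
    · have humem : u ∈ e.erase v := Finset.mem_erase.mpr ⟨huv, hue⟩
      have hinn : ∀ u' ∈ e.erase v, 0 ≤ φ u' - φ v := by
        intro u' _
        have := hnn u'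
        linarith [hv]
      have := (Finset.sum_eq_zero_iff_of_nonneg hinn).mp hinner u humem
      linarith [hv]
  -- Zero propagation along hyperpaths
  have hchain : ∀ (γ : List (Finset V)) (a : Finset V), (∀ e ∈ a :: γ, e ∈ E) →
      (a :: γ).Chain' (fun s t => (s ∩ t).Nonempty) → ∀ x ∈ a, φ x = 0 →
      ∀ e ∈ a :: γ, ∀ u ∈ e, φ u = 0 := by
    intro γ
    induction γ with
    | nil =>
      intro a hE _ x hx hxz e he u hu
      simp only [List.mem_cons, List.not_mem_nil, or_false] at he
      subst he
      exact hzero x hxz e (hE e (by simp)) hx u hu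
    | cons b l ih =>
      intro a hE hch x hx hxz e he u hu
      have haz : ∀ u' ∈ a, φ u' = 0 := fun u' hu' =>
        hzero x hxz a (hE a (by simp)) hx u' hu'
      obtain ⟨y, hy⟩ := (List.isChain_cons_cons.mp hch).1
      have hya := (Finset.mem_inter.mp hy).1
      have hyb := (Finset.mem_inter.mp hy).2
      have hrest := ih b (fun e' he' => hE e' (List.mem_cons_of_mem _ he'))
        (List.isChain_cons_cons.mp hch).2 y hyb (haz y hya)
      rcases List.mem_cons.mp he with h' | h'
      · subst h'; exact haz u hu
      · exact hrest e h' u hu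
  -- Step 2: φ > 0
  have hposφ : ∀ v, 0 < φ v := by
    intro v
    rcases (hnn v).lt_or_eq with hlt | heq
    · exact hlt
    exfalso
    have hwpos : 0 < φ w := lt_of_le_of_ne (hnn w) (Ne.symm hw')
    have hvw : v ≠ w := by intro hh'; rw [hh'] at heq; linarith
    obtain ⟨γ, hγne, hγE, hγch, hvh, hwl⟩ := hconn v w hvw
    cases γ with
    | nil => exact hγne rfl
    | cons a l =>
      have hall := hchain l a hγE hγch v (by simpa using hvh) heq.symm
      have hlast := List.getLast_mem hγne
      have := hall _ hlast w hwl
      linarith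
  refine ⟨hposφ, fun v => ?_⟩
  have := hsol v
  rwa [max_eq_left (hposφ v).le] at this
end
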